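/- Let G be a progressive graph with a linear order ≺ on E(G) satisfying condition (P1). Then (G, ≺) is a POP-graph (i.e., ≺ also satisfies (P2)) if and only if ≺ satisfies conditions (U2) and (P3). -/

import Mathlib

variable {V E : Type}

/-- Edge reachability `e1 → e2`: a directed path of edges `f_0, …, f_k` with `k ≥ 1`,
`f_0 = e1`, `f_k = e2` and `t f_{i-1} = s f_i`. -/
def eReach (s t : E → V) : E → E → Prop :=
  Relation.TransGen (fun a b => t a = s b)

/-- Vertex reachability `v → w`: a directed path from `v` to `w` using at least one edge. -/
def vReach (s t : E → V) : V → V → Prop :=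
  Relation.TransGen (fun v w => ∃ e, s e = v ∧ t e = w)

/-- A directed graph is acyclic if no vertex reaches itself. -/
def Acyclic (s t : E → V) : Prop := ∀ v, ¬ vReach s t v v

/-- `I(v)`: incoming edges of `v`. -/
def inE (t : E → V) (v : V) : Set E := {e | t e = v}

/-- `O(v)`: outgoing edges of `v`. -/
def outE (s : E → V) (v : V) : Set E := {e | s e = v}

/-- Convex hull `X̄` of `X` in the linear order `le`: the interval `{y | X^- ≤ y ≤ X^+}`
(empty when `X` is empty). -/
def hull (le : E → E → Prop) (X : Set E) : Set E :=
  {y | ∃ a ∈ X, ∃ b ∈ X, le a y ∧ le y b}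

/-- The strict order associated to a linear order `le`. -/
def ltOf (le : E → E → Prop) (a b : E) : Prop := le a b ∧ a ≠ b

/-- A source: no incoming edges. -/
def IsSource (t : E → V) (v : V) : Prop := inE t v = ∅

/-- A sink: no outgoing edges. -/
def IsSink (s : E → V) (v : V) : Prop := outE s v = ∅

/-- A progressive graph: acyclic and every source and every sink has degree 1. -/
def Progressive (s t : E → V) : Prop :=
  Acyclic s t ∧
  ∀ v, (IsSource t v ∨ IsSink s v) → ({e | s e = v ∨ t e = v} : Set E).ncard = 1

/-- `I(G)`: input edges, those whose source vertex is a source of `G`. -/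
def inputE (s t : E → V) : Set E := {e | IsSource t (s e)}

/-- `O(G)`: output edges, those whose target vertex is a sink of `G`. -/
def outputE (s t : E → V) : Set E := {e | IsSink s (t e)}

/-- Condition (U1) = (P1): `e1 → e2` implies `e1 ≺ e2`. -/
def U1 (s t : E → V) (le : E → E → Prop) : Prop :=
  ∀ e1 e2, eReach s t e1 e2 → ltOf le e1 e2

/-- Condition (U2): for every vertex `v`, `Ī(v) ∩ Ō(v) = ∅` and `Ē(v) = Ī(v) ∪ Ō(v)`. -/
def U2 (s t : E → V) (le : E → E → Prop) : Prop :=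
  ∀ v, hull le (inE t v) ∩ hull le (outE s v) = ∅ ∧
    hull le (inE t v ∪ outE s v) = hull le (inE t v) ∪ hull le (outE s v)

/-- Condition (U3). -/
def U3 (s t : E → V) (le : E → E → Prop) : Prop :=
  ∀ v1 v2,
    ((inE t v1 ∩ hull le (inE t v2)).Nonempty →
      hull le (inE t v1) ⊆ hull le (inE t v2)) ∧
    ((outE s v1 ∩ hull le (outE s v2)).Nonempty →
      hull le (outE s v1) ⊆ hull le (outE s v2))

/-- Condition (U4): for every progressive vertex `v`, `I(G) ∩ Ō(v) = ∅` and `O(G) ∩ Ī(v) = ∅`. -/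
def U4 (s t : E → V) (le : E → E → Prop) : Prop :=
  ∀ v, ¬ IsSource t v → ¬ IsSink s v →
    inputE s t ∩ hull le (outE s v) = ∅ ∧ outputE s t ∩ hull le (inE t v) = ∅

/-- An upward planar order: a linear order on the edges satisfying (U1), (U2), (U3). -/
def IsUPO (s t : E → V) (le : E → E → Prop) : Prop :=
  IsLinearOrder E le ∧ U1 s t le ∧ U2 s t le ∧ U3 s t le

/-- Condition (P2). -/
def P2 (s t : E → V) (le : E → E → Prop) : Prop :=
  ∀ e1 e2 e3, ltOf le e1 e2 → ltOf le e2 e3 → eReach s t e1 e3 →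
    eReach s t e1 e2 ∨ eReach s t e2 e3

/-- Condition (P̃2). -/
def P2t (s t : E → V) (le : E → E → Prop) : Prop :=
  ∀ e1 e2 e3, ltOf le e1 e2 → ltOf le e2 e3 → t e1 = s e3 →
    eReach s t e1 e2 ∨ eReach s t e2 e3

/-- Condition (P3) (for distinct vertices). -/
def P3 (s t : E → V) (le : E → E → Prop) : Prop :=
  ∀ v1 v2, v1 ≠ v2 →
    ((inE t v1 ∩ hull le (inE t v2)).Nonempty → vReach s t v1 v2) ∧
    ((outE s v1 ∩ hull le (outE s v2)).Nonempty → vReach s t v2 v1)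

/-- Condition (A): for distinct `v1 v2`, `∅ ≠ Ī(v1) ⊆ Ī(v2)` implies `v1 → v2`,
and `∅ ≠ Ō(v1) ⊆ Ō(v2)` implies `v2 → v1`. -/
def CondA (s t : E → V) (le : E → E → Prop) : Prop :=
  ∀ v1 v2, v1 ≠ v2 →
    ((hull le (inE t v1)).Nonempty → hull le (inE t v1) ⊆ hull le (inE t v2) →
      vReach s t v1 v2) ∧
    ((hull le (outE s v1)).Nonempty → hull le (outE s v1) ⊆ hull le (outE s v2) →
      vReach s t v2 v1)

/-- A POP-graph: a progressive graph with a planar order ((P1) and (P2)). -/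
def IsPOP (s t : E → V) (le : E → E → Prop) : Prop :=
  Progressive s t ∧ IsLinearOrder E le ∧ U1 s t le ∧ P2 s t le

/-- `U(v) = {w | Ō(v) ⊊ Ō(w)}` when `O(v) ≠ ∅`, and `U(v) = ∅` otherwise. -/
def Uset (s : E → V) (le : E → E → Prop) (v : V) : Set V :=
  {w | (outE s v).Nonempty ∧ hull le (outE s v) ⊂ hull le (outE s w)}

/-- `D(v) = {w | Ī(v) ⊊ Ī(w)}` when `I(v) ≠ ∅`, and `D(v) = ∅` otherwise. -/
def Dset (t : E → V) (le : E → E → Prop) (v : V) : Set V :=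
  {w | (inE t v).Nonempty ∧ hull le (inE t v) ⊂ hull le (inE t w)}

/-- A CPP-extension of `G = (s, t)`: a POP-graph `(s', t', le')` with an embedding
`(φ0, φ1)` satisfying (E1)–(E4). -/
def IsCPP {V' E' : Type} (s t : E → V) (s' t' : E' → V')
    (le' : E' → E' → Prop) (φ0 : V → V') (φ1 : E → E') : Prop :=
  Function.Injective φ0 ∧ Function.Injective φ1 ∧
  (∀ e, s' (φ1 e) = φ0 (s e)) ∧ (∀ e, t' (φ1 e) = φ0 (t e)) ∧
  IsPOP s' t' le' ∧
  -- (E1)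
  Set.range φ0 = {v : V' | ¬ IsSource t' v ∧ ¬ IsSink s' v} ∧
  -- (E2)
  Nat.card E' = Nat.card E + ({v : V | IsSource t v}).ncard + ({v : V | IsSink s v}).ncard ∧
  -- (E3)
  (∀ v w, IsSource t v → IsSink s w → inE t' (φ0 v) ∩ outE s' (φ0 w) = ∅) ∧
  -- (E4)
  (∀ e' : E', e' ∉ Set.range φ1 → e' ∉ inputE s' t' → e' ∉ outputE s' t' →
    ((∃ a ∈ outE s' (s' e'), ltOf le' a e') ∧ (∃ b ∈ outE s' (s' e'), ltOf le' e' b)) ∨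
    ((∃ a ∈ inE t' (t' e'), ltOf le' a e') ∧ (∃ b ∈ inE t' (t' e'), ltOf le' e' b)))
lemma POPaux_cases_head {α : Type*} {r : α → α → Prop} {a b : α}
    (h : Relation.TransGen r a b) : r a b ∨ ∃ c, r a c ∧ Relation.TransGen r c b := by
  induction h using Relation.TransGen.head_induction_on with
  | single h => exact Or.inl h
  | head h' h _ => exact Or.inr ⟨_, h', h⟩

lemma POPaux_vReach_of_eReach (s t : E → V) {e f : E} (h : eReach s t e f) :
    t e = s f ∨ vReach s t (t e) (s f) := by
  induction h with
  | single h => exact Or.inl h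
  | @tail b c h₁ h₂ ih =>
    rcases ih with h | h
    · exact Or.inr (Relation.TransGen.single ⟨b, h.symm, h₂⟩)
    · exact Or.inr (h.tail ⟨b, rfl, h₂⟩)

lemma POPaux_eReach_of_vReach (s t : E → V) {u w : V} (h : vReach s t u w) :
    ∀ e f, t e = u → s f = w → eReach s t e f := by
  induction h with
  | single h =>
    rintro e f he hf
    obtain ⟨g, hg1, hg2⟩ := h
    have h1 : eReach s t e g := Relation.TransGen.single (he.trans hg1.symm)
    exact h1.tail (show t g = s f from hg2.trans hf.symm)
  | @tail b c h₁ h₂ ih =>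
    rintro e f he hf
    obtain ⟨g, hg1, hg2⟩ := h₂
    exact (ih e g he hg1).tail (show t g = s f from hg2.trans hf.symm)

/-- for a progressive graph with (P1): (P2) ↔ ((U2) and (P3)). -/
theorem P2_iff_U2_and_P3 {V E : Type} [Fintype V] [Fintype E]
    (s t : E → V) (le : E → E → Prop) (hlin : IsLinearOrder E le)
    (hprog : Progressive s t) (hP1 : U1 s t le) :
    P2 s t le ↔ (U2 s t le ∧ P3 s t le) := by
  obtain ⟨hacyc, hdeg⟩ := hprog
  have hrefl : ∀ a : E, le a a := fun a => hlin.toIsPartialOrder.toIsPreorder.refl a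
  have htrans : ∀ {a b c : E}, le a b → le b c → le a c := fun {a b c} h1 h2 =>
    hlin.toIsPartialOrder.toIsPreorder.trans a b c h1 h2
  have hanti : ∀ {a b : E}, le a b → le b a → a = b := fun {a b} h1 h2 =>
    hlin.toIsPartialOrder.toAntisymm.antisymm a b h1 h2
  have htotal : ∀ a b : E, le a b ∨ le b a := fun a b => hlin.toTotal.total a b
  -- disjointness of hulls follows from (P1) alone
  have hdisj : ∀ v y, y ∈ hull le (inE t v) → y ∈ hull le (outE s v) → False := by
    intro v y hyI hyO
    obtain ⟨a1, ha1, b1, hb1, hay, hyb⟩ := hyI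
    obtain ⟨a2, ha2, b2, hb2, hay2, hyb2⟩ := hyO
    have h1 : ltOf le b1 a2 := hP1 _ _ (Relation.TransGen.single (hb1.trans ha2.symm))
    exact h1.2 (hanti h1.1 (htrans hay2 hyb))
  constructor
  · intro hP2
    constructor
    · -- U2
      intro v
      constructor
      · ext y
        simp only [Set.mem_inter_iff, Set.mem_empty_iff_false, iff_false, not_and]
        intro h1 h2; exact hdisj v y h1 h2
      · apply Set.Subset.antisymm
        · rintro y ⟨a, ha, b, hb, hay, hyb⟩
          rcases ha with haI | haO
          · rcases hb with hbI | hbO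
            · exact Or.inl ⟨a, haI, b, hbI, hay, hyb⟩
            · by_cases hyI : t y = v
              · exact Or.inl ⟨y, hyI, y, hyI, hrefl y, hrefl y⟩
              by_cases hyO : s y = v
              · exact Or.inr ⟨y, hyO, y, hyO, hrefl y, hrefl y⟩
              have hay' : ltOf le a y := ⟨hay, fun h => hyI (h ▸ haI)⟩
              have hyb' : ltOf le y b := ⟨hyb, fun h => hyO (h ▸ hbO)⟩
              have hreach : eReach s t a b :=
                Relation.TransGen.single (haI.trans hbO.symm)
              rcases hP2 a y b hay' hyb' hreach with h | h
              · rcases POPaux_cases_head h with h1 | ⟨c, hc1, hc2⟩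
                · exact (hyO (h1.symm.trans haI)).elim
                · exact Or.inr ⟨c, hc1.symm.trans haI, b, hbO, (hP1 _ _ hc2).1, hyb⟩
              · cases h with
                | single h1 => exact (hyI (h1.trans hbO)).elim
                | tail h1 h2 =>
                  exact Or.inl ⟨a, haI, _, h2.trans hbO, hay, (hP1 _ _ h1).1⟩
          · rcases hb with hbI | hbO
            · have h1 : ltOf le b a :=
                hP1 _ _ (Relation.TransGen.single (hbI.trans haO.symm))
              exact (h1.2 (hanti h1.1 (htrans hay hyb))).elim
            · exact Or.inr ⟨a, haO, b, hbO, hay, hyb⟩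
        · rintro y (⟨a, ha, b, hb, hay, hyb⟩ | ⟨a, ha, b, hb, hay, hyb⟩)
          · exact ⟨a, Or.inl ha, b, Or.inl hb, hay, hyb⟩
          · exact ⟨a, Or.inr ha, b, Or.inr hb, hay, hyb⟩
    · -- P3
      intro v1 v2 hne
      constructor
      · rintro ⟨e, heI, a, haI2, b, hbI2, hae, heb⟩
        have heNI2 : t e ≠ v2 := fun h => hne (heI.symm.trans h)
        have hab : a ≠ b := by
          intro h; subst h
          exact heNI2 ((hanti heb hae) ▸ haI2)
        have hns : ¬ IsSink s v2 := by
          intro hsink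
          have h1 := hdeg v2 (Or.inr hsink)
          rw [Set.ncard_eq_one] at h1
          obtain ⟨x, hx⟩ := h1
          have haa : a ∈ ({e | s e = v2 ∨ t e = v2} : Set E) := Or.inr haI2
          have hbb : b ∈ ({e | s e = v2 ∨ t e = v2} : Set E) := Or.inr hbI2
          rw [hx, Set.mem_singleton_iff] at haa hbb
          exact hab (haa.trans hbb.symm)
        obtain ⟨f, hfO⟩ := Set.nonempty_iff_ne_empty.mpr hns
        have hane : a ≠ e := fun h => heNI2 (h ▸ haI2)
        have hltbf : ltOf le b f :=
          hP1 _ _ (Relation.TransGen.single (hbI2.trans hfO.symm))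
        have hltef : ltOf le e f := by
          refine ⟨htrans heb hltbf.1, ?_⟩
          intro h; subst h
          exact hltbf.2 (hanti hltbf.1 heb)
        have hreach_af : eReach s t a f :=
          Relation.TransGen.single (haI2.trans hfO.symm)
        rcases hP2 a e f ⟨hae, hane⟩ hltef hreach_af with h | h
        · rcases POPaux_cases_head h with h1 | ⟨c, hc1, hc2⟩
          · exact (hdisj v2 e ⟨a, haI2, b, hbI2, hae, heb⟩
              ⟨e, h1.symm.trans haI2, e, h1.symm.trans haI2, hrefl e, hrefl e⟩).elim
          · have hcO : s c = v2 := hc1.symm.trans haI2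
            exact (hdisj v2 c
              ⟨a, haI2, b, hbI2, (hP1 _ _ (Relation.TransGen.single hc1)).1,
                htrans (hP1 _ _ hc2).1 heb⟩
              ⟨c, hcO, c, hcO, hrefl c, hrefl c⟩).elim
        · rcases POPaux_vReach_of_eReach s t h with h1 | h1
          · exact absurd (heI.symm.trans (h1.trans hfO)) hne
          · rw [heI, hfO] at h1; exact h1
      · rintro ⟨e, heO, a, haO2, b, hbO2, hae, heb⟩
        have heNO2 : s e ≠ v2 := fun h => hne (heO.symm.trans h)
        have hab : a ≠ b := by
          intro h; subst h
          exact heNO2 ((hanti heb hae) ▸ haO2)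
        have hns : ¬ IsSource t v2 := by
          intro hsrc
          have h1 := hdeg v2 (Or.inl hsrc)
          rw [Set.ncard_eq_one] at h1
          obtain ⟨x, hx⟩ := h1
          have haa : a ∈ ({e | s e = v2 ∨ t e = v2} : Set E) := Or.inl haO2
          have hbb : b ∈ ({e | s e = v2 ∨ t e = v2} : Set E) := Or.inl hbO2
          rw [hx, Set.mem_singleton_iff] at haa hbb
          exact hab (haa.trans hbb.symm)
        obtain ⟨f, hfI⟩ := Set.nonempty_iff_ne_empty.mpr hns
        have hbne : e ≠ b := fun h => heNO2 (h ▸ hbO2)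
        have hltfa : ltOf le f a :=
          hP1 _ _ (Relation.TransGen.single (hfI.trans haO2.symm))
        have hltfe : ltOf le f e := by
          refine ⟨htrans hltfa.1 hae, ?_⟩
          intro h; subst h
          exact hltfa.2 (hanti hltfa.1 hae)
        have hreach_fb : eReach s t f b :=
          Relation.TransGen.single (hfI.trans hbO2.symm)
        rcases hP2 f e b hltfe ⟨heb, hbne⟩ hreach_fb with h | h
        · rcases POPaux_vReach_of_eReach s t h with h1 | h1
          · exact absurd (heO.symm.trans (h1.symm.trans hfI)) hne
          · rw [hfI, heO] at h1; exact h1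
        · cases h with
          | single h1 =>
            exact (hdisj v2 e ⟨e, h1.trans hbO2, e, h1.trans hbO2, hrefl e, hrefl e⟩
              ⟨a, haO2, b, hbO2, hae, heb⟩).elim
          | @tail c _ h1 h2 =>
            have hcI : t c = v2 := h2.trans hbO2
            exact (hdisj v2 c ⟨c, hcI, c, hcI, hrefl c, hrefl c⟩
              ⟨a, haO2, b, hbO2, htrans hae (hP1 _ _ h1).1,
                (hP1 _ _ (Relation.TransGen.single h2)).1⟩).elim
  · rintro ⟨hU2, hP3⟩
    have hP2t : ∀ e1 e2 e3, ltOf le e1 e2 → ltOf le e2 e3 → t e1 = s e3 →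
        eReach s t e1 e2 ∨ eReach s t e2 e3 := by
      intro e1 e2 e3 h12 h23 hts
      have he2mem : e2 ∈ hull le (inE t (t e1) ∪ outE s (t e1)) :=
        ⟨e1, Or.inl rfl, e3, Or.inr hts.symm, h12.1, h23.1⟩
      rw [(hU2 (t e1)).2] at he2mem
      rcases he2mem with hI | hO
      · by_cases hw : t e2 = t e1
        · exact Or.inr (Relation.TransGen.single (hw.trans hts))
        · have hv := (hP3 (t e2) (t e1) hw).1 ⟨e2, rfl, hI⟩
          exact Or.inr (POPaux_eReach_of_vReach s t hv e2 e3 rfl hts.symm)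
      · by_cases hu : s e2 = t e1
        · exact Or.inl (Relation.TransGen.single hu.symm)
        · have hv := (hP3 (s e2) (t e1) hu).2 ⟨e2, rfl, hO⟩
          exact Or.inl (POPaux_eReach_of_vReach s t hv e1 e2 rfl rfl)
    intro e1 e2 e3 h12 h23 h13
    have key : ∀ a, eReach s t a e3 → ltOf le a e2 →
        eReach s t a e2 ∨ eReach s t e2 e3 := by
      intro a h13'
      induction h13' using Relation.TransGen.head_induction_on with
      | single h => exact fun h12' => hP2t _ _ _ h12' h23 h
      | @head a c hstep' hrest ihr =>
        intro h12'
        by_cases hec : e2 = c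
        · exact Or.inl (Relation.TransGen.single (hstep'.trans (congrArg s hec).symm))
        · rcases htotal e2 c with hle1 | hle2
          · rcases hP2t a e2 c h12' ⟨hle1, hec⟩ hstep' with h | h
            · exact Or.inl h
            · exact Or.inr (h.trans hrest)
          · rcases ihr ⟨hle2, fun hh => hec hh.symm⟩ with h | h
            · exact Or.inl (Relation.TransGen.head hstep' h)
            · exact Or.inr h
    exact key e1 h13 h12
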